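/- For every integer j ≥ 2 and every real number z with |z| < 1, the ordinary generating function of the generalized transformation coefficients in the upper index satisfies Σ_{k=0}^{∞} S(k, j) · z^k = (−1)^{j+1} / ((1−z)(2−z)···(j−z)), i.e. the sum equals (−1)^{j+1} divided by Π_{i=1}^{j} (i − z). -/

import Mathlib

/-- The generalized transformation coefficient
`S k j = (1/j!) · Σ_{m=1}^{j} C(j,m) · (−1)^{j−m} · m^{−k}`. -/
noncomputable def S (k j : ℕ) : ℝ :=
  (1 / (Nat.factorial j : ℝ)) *
    ∑ m ∈ Finset.Icc 1 j, (Nat.choose j m : ℝ) * (-1 : ℝ) ^ (j - m) / (m : ℝ) ^ k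

lemma pf (j : ℕ) : ∀ x : ℝ, (∀ m ∈ Finset.range (j+1), x + m ≠ 0) →
    ∑ m ∈ Finset.range (j+1), (j.choose m : ℝ) * (-1)^m / (x + m)
      = (Nat.factorial j : ℝ) / ∏ m ∈ Finset.range (j+1), (x + m) := by
  induction j with
  | zero => intro x hx; simp
  | succ j ih =>
    intro x hx
    have hx0 : x ≠ 0 := by simpa using hx 0 (by simp)
    have hxj : x + (j+1 : ℕ) ≠ 0 := hx (j+1) (by simp)
    have hP : (∏ m ∈ Finset.range (j+1), (x + m)) ≠ 0 :=
      Finset.prod_ne_zero_iff.2 fun m hm => hx m (by simp at hm ⊢; omega)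
    have hPb : (∏ m ∈ Finset.range (j+1), (x + 1 + m)) ≠ 0 :=
      Finset.prod_ne_zero_iff.2 fun m hm => by
        have := hx (m+1) (by simp at hm ⊢; omega); intro h; apply this; push_cast; linarith
    have key : (x + (j+1:ℕ)) * ∏ m ∈ Finset.range (j+1), (x + m)
        = x * ∏ m ∈ Finset.range (j+1), (x + 1 + m) := by
      have h1 := Finset.prod_range_succ (fun m => x + (m:ℝ)) (j+1)
      have h2 := Finset.prod_range_succ' (fun m => x + (m:ℝ)) (j+1)
      have h3 : ∏ m ∈ Finset.range (j+1), (x + ((m:ℝ)+1))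
          = ∏ m ∈ Finset.range (j+1), (x + 1 + (m:ℝ)) :=
        Finset.prod_congr rfl (fun m _ => by ring)
      push_cast at h1 h2 ⊢
      rw [h3] at h2
      linear_combination h2 - h1
    have ihx := ih x (fun m hm => hx m (by simp at hm ⊢; omega))
    have ihx1 := ih (x+1) (fun m hm => by
      have := hx (m+1) (by simp at hm ⊢; omega); intro h; apply this; push_cast; linarith)
    rw [Finset.sum_range_succ' (fun m => ((j+1).choose m : ℝ) * (-1)^m / (x + m)) (j+1)]
    have hsplit : ∀ m, (((j+1).choose (m+1) : ℕ) : ℝ) = (j.choose m : ℝ) + (j.choose (m+1) : ℝ) := by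
      intro m; rw [Nat.choose_succ_succ]; push_cast; ring
    set g : ℕ → ℝ := fun m => (j.choose m : ℝ) * (-1)^m / (x + m) with hg
    have split : ∑ m ∈ Finset.range (j+1), (((j+1).choose (m+1) : ℝ)) * (-1)^(m+1) / (x + ↑(m+1))
        = (∑ m ∈ Finset.range (j+1), -((j.choose m : ℝ) * (-1)^m / (x+1+↑m)))
          + ∑ m ∈ Finset.range (j+1), g (m+1) := by
      rw [← Finset.sum_add_distrib]
      apply Finset.sum_congr rfl; intro m hm
      have hne1 : x + 1 + (m:ℝ) ≠ 0 := by
        have := hx (m+1) (by simp at hm ⊢; omega); intro h; apply this; push_cast; linarith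
      rw [hsplit m, hg]
      push_cast
      have : x + ((m:ℝ)+1) = x + 1 + m := by ring
      rw [this]
      ring
    have e2 : ∑ m ∈ Finset.range (j+1), g (m+1) = (∑ m ∈ Finset.range (j+1), g m) - g 0 := by
      have ha := Finset.sum_range_succ' g (j+1)
      have hb := Finset.sum_range_succ g (j+1)
      have hc : g (j+1) = 0 := by simp [hg]
      rw [hc, add_zero] at hb
      rw [hb] at ha
      linarith
    have hg0 : g 0 = 1/x := by simp [hg]
    rw [split, e2, hg0, Finset.sum_neg_distrib, ihx1]
    have ihx' : ∑ m ∈ Finset.range (j+1), g m = (Nat.factorial j : ℝ) / ∏ m ∈ Finset.range (j+1), (x + m) := ihx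
    rw [ihx']
    rw [Finset.prod_range_succ (fun m => x + (m:ℝ)) (j+1)]
    simp only [Nat.choose_zero_right, Nat.cast_one, pow_zero, Nat.cast_zero, add_zero,
      Nat.factorial_succ]
    push_cast at key hxj hP hPb ⊢
    field_simp
    ring_nf
    ring_nf at key
    linear_combination (-(Nat.factorial j : ℝ) * x) * key

lemma range_succ_Icc (j : ℕ) : Finset.range (j+1) = insert 0 (Finset.Icc 1 j) := by
  ext m; simp [Finset.mem_range, Finset.mem_Icc]; omega

lemma sign_split {j m : ℕ} (hm : m ≤ j) : (-1:ℝ)^(j-m) = (-1)^j * (-1)^m := by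
  have h1 : (-1:ℝ)^(j-m) * (-1)^m = (-1)^j := by
    rw [← pow_add, Nat.sub_add_cancel hm]
  have h2 : (-1:ℝ)^m * (-1)^m = 1 := by
    rw [← pow_add]; exact Even.neg_one_pow ⟨m, rfl⟩
  calc (-1:ℝ)^(j-m) = (-1:ℝ)^(j-m) * ((-1)^m * (-1)^m) := by rw [h2, mul_one]
    _ = ((-1:ℝ)^(j-m) * (-1)^m) * (-1)^m := by ring
    _ = (-1)^j * (-1)^m := by rw [h1]

lemma prod_Icc_cast (j : ℕ) : ∏ i ∈ Finset.Icc 1 j, (i:ℝ) = (Nat.factorial j : ℝ) := by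
  induction j with
  | zero => simp
  | succ j ih =>
    rw [Finset.prod_Icc_succ_top (by omega : 1 ≤ j + 1), ih, Nat.factorial_succ]
    push_cast; ring

lemma alt_sum (j : ℕ) (hj : 1 ≤ j) :
    ∑ m ∈ Finset.Icc 1 j, (j.choose m : ℝ) * (-1)^m = -1 := by
  have h := Int.alternating_sum_range_choose_of_ne (by omega : j ≠ 0)
  have h' : ∑ m ∈ Finset.range (j+1), (j.choose m : ℝ) * (-1)^m = 0 := by
    have := congrArg (fun n : ℤ => (n : ℝ)) h
    push_cast at this
    rw [← this]
    exact Finset.sum_congr rfl fun m _ => by ring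
  rw [range_succ_Icc, Finset.sum_insert (by simp)] at h'
  simp at h'
  linarith

lemma main_id (j : ℕ) (hj : 1 ≤ j) (z : ℝ) (hz1 : z < 1) :
    ∑ m ∈ Finset.Icc 1 j, (j.choose m : ℝ) * (-1)^(j-m) * ((m:ℝ)/((m:ℝ) - z))
      = (-1)^(j+1) * (Nat.factorial j : ℝ) / ∏ i ∈ Finset.Icc 1 j, ((i:ℝ) - z) := by
  have hmz : ∀ m ∈ Finset.Icc 1 j, (m:ℝ) - z ≠ 0 := by
    intro m hm
    simp only [Finset.mem_Icc] at hm
    have : (1:ℝ) ≤ m := by exact_mod_cast hm.1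
    intro h; linarith
  have hQne : (∏ i ∈ Finset.Icc 1 j, ((i:ℝ) - z)) ≠ 0 :=
    Finset.prod_ne_zero_iff.2 hmz
  by_cases hz0 : z = 0
  · subst hz0
    have hL : ∑ m ∈ Finset.Icc 1 j, (j.choose m : ℝ) * (-1)^(j-m) * ((m:ℝ)/((m:ℝ) - 0))
        = ∑ m ∈ Finset.Icc 1 j, (-1:ℝ)^j * ((j.choose m : ℝ) * (-1)^m) := by
      apply Finset.sum_congr rfl; intro m hm
      simp only [Finset.mem_Icc] at hm
      have hm0 : (m:ℝ) ≠ 0 := Nat.cast_ne_zero.2 (by omega)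
      rw [sign_split hm.2, sub_zero]
      field_simp
    rw [hL, ← Finset.mul_sum, alt_sum j hj]
    have hP0 : ∏ i ∈ Finset.Icc 1 j, ((i:ℝ) - 0) = (Nat.factorial j : ℝ) := by
      simp [prod_Icc_cast]
    have hfac : (Nat.factorial j : ℝ) ≠ 0 := Nat.cast_ne_zero.2 (Nat.factorial_ne_zero j)
    rw [hP0, mul_div_assoc, div_self hfac, mul_one, pow_succ]
  · have hx : ∀ m ∈ Finset.range (j+1), -z + (m:ℝ) ≠ 0 := by
      intro m hm
      rcases Nat.eq_zero_or_pos m with h0 | h1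
      · subst h0; simpa using hz0
      · have : (1:ℝ) ≤ m := by exact_mod_cast h1
        intro h; have := hmz m (by simp [Finset.mem_Icc] at hm ⊢; omega); apply this; linarith
    have hpf := pf j (-z) hx
    rw [range_succ_Icc, Finset.sum_insert (by simp), Finset.prod_insert (by simp)] at hpf
    simp only [Nat.choose_zero_right, Nat.cast_one, pow_zero, Nat.cast_zero, add_zero,
      one_mul, mul_one] at hpf
    have hsum_eq : ∑ m ∈ Finset.Icc 1 j, (j.choose m : ℝ) * (-1)^m / (-z + (m:ℝ))
        = ∑ m ∈ Finset.Icc 1 j, (j.choose m : ℝ) * (-1)^m / ((m:ℝ) - z) :=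
      Finset.sum_congr rfl fun m hm => by rw [show -z + (m:ℝ) = (m:ℝ) - z from by ring]
    have hprod_eq : ∏ m ∈ Finset.Icc 1 j, (-z + (m:ℝ))
        = ∏ m ∈ Finset.Icc 1 j, ((m:ℝ) - z) :=
      Finset.prod_congr rfl fun m hm => by ring
    rw [hsum_eq, hprod_eq] at hpf
    have hL : ∑ m ∈ Finset.Icc 1 j, (j.choose m : ℝ) * (-1)^(j-m) * ((m:ℝ)/((m:ℝ) - z))
        = ∑ m ∈ Finset.Icc 1 j, ((-1:ℝ)^j * ((j.choose m : ℝ) * (-1)^m)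
            + ((-1:ℝ)^j * z) * ((j.choose m : ℝ) * (-1)^m / ((m:ℝ) - z))) := by
      apply Finset.sum_congr rfl; intro m hm
      have hne := hmz m hm
      simp only [Finset.mem_Icc] at hm
      rw [sign_split hm.2]
      field_simp
      ring
    have hA : ∑ m ∈ Finset.Icc 1 j, (j.choose m : ℝ) * (-1)^m / ((m:ℝ) - z)
        = (Nat.factorial j : ℝ) / (-z * ∏ m ∈ Finset.Icc 1 j, ((m:ℝ) - z)) - 1 / -z := by
      linarith [hpf]
    rw [hL, Finset.sum_add_distrib, ← Finset.mul_sum, ← Finset.mul_sum, alt_sum j hj, hA]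
    field_simp
    ring

theorem stmt_1 (j : ℕ) (hj : 2 ≤ j) (z : ℝ) (hz : |z| < 1) :
    HasSum (fun k : ℕ => S k j * z ^ k)
      ((-1 : ℝ) ^ (j + 1) / ∏ i ∈ Finset.Icc 1 j, ((i : ℝ) - z)) := by
  have hj1 : 1 ≤ j := by omega
  have hz1 : z < 1 := lt_of_le_of_lt (le_abs_self z) hz
  have hgeo : ∀ m ∈ Finset.Icc 1 j, HasSum
      (fun k : ℕ => (1/(Nat.factorial j : ℝ)) * ((j.choose m : ℝ)*(-1)^(j-m)) * (z/(m:ℝ))^k)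
      ((1/(Nat.factorial j : ℝ)) * ((j.choose m : ℝ)*(-1)^(j-m)) * (1 - z/(m:ℝ))⁻¹) := by
    intro m hm
    simp only [Finset.mem_Icc] at hm
    have hm1 : (1:ℝ) ≤ m := by exact_mod_cast hm.1
    have habs : |z/(m:ℝ)| < 1 := by
      rw [abs_div, abs_of_nonneg (by linarith : (0:ℝ) ≤ (m:ℝ))]
      calc |z|/(m:ℝ) ≤ |z| := div_le_self (abs_nonneg z) hm1
        _ < 1 := hz
    exact (hasSum_geometric_of_abs_lt_one habs).mul_left _
  have h := hasSum_sum hgeo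
  have hfun : (fun k : ℕ => S k j * z ^ k)
      = fun k : ℕ => ∑ m ∈ Finset.Icc 1 j,
          (1/(Nat.factorial j : ℝ)) * ((j.choose m : ℝ)*(-1)^(j-m)) * (z/(m:ℝ))^k := by
    funext k
    rw [S, Finset.mul_sum, Finset.sum_mul]
    apply Finset.sum_congr rfl; intro m hm
    rw [div_pow]
    ring
  have hval : ∑ m ∈ Finset.Icc 1 j,
      (1/(Nat.factorial j : ℝ)) * ((j.choose m : ℝ)*(-1)^(j-m)) * (1 - z/(m:ℝ))⁻¹
      = (-1:ℝ)^(j+1) / ∏ i ∈ Finset.Icc 1 j, ((i : ℝ) - z) := by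
    have hfac : (Nat.factorial j : ℝ) ≠ 0 := Nat.cast_ne_zero.2 (Nat.factorial_ne_zero j)
    have hQne : (∏ i ∈ Finset.Icc 1 j, ((i:ℝ) - z)) ≠ 0 := by
      apply Finset.prod_ne_zero_iff.2
      intro m hm
      simp only [Finset.mem_Icc] at hm
      have : (1:ℝ) ≤ m := by exact_mod_cast hm.1
      intro hcon; linarith
    calc ∑ m ∈ Finset.Icc 1 j,
        (1/(Nat.factorial j : ℝ)) * ((j.choose m : ℝ)*(-1)^(j-m)) * (1 - z/(m:ℝ))⁻¹
        = (1/(Nat.factorial j : ℝ)) * ∑ m ∈ Finset.Icc 1 j,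
            (j.choose m : ℝ) * (-1)^(j-m) * ((m:ℝ)/((m:ℝ) - z)) := by
          rw [Finset.mul_sum]
          apply Finset.sum_congr rfl; intro m hm
          simp only [Finset.mem_Icc] at hm
          have hm1 : (1:ℝ) ≤ m := by exact_mod_cast hm.1
          have hm0 : (m:ℝ) ≠ 0 := by linarith
          have hmz : (m:ℝ) - z ≠ 0 := by intro hcon; linarith
          have : 1 - z/(m:ℝ) = ((m:ℝ) - z)/(m:ℝ) := by field_simp
          rw [this, inv_div]
          ring
      _ = (1/(Nat.factorial j : ℝ)) *
            ((-1:ℝ)^(j+1) * (Nat.factorial j : ℝ) / ∏ i ∈ Finset.Icc 1 j, ((i:ℝ) - z)) := by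
          rw [main_id j hj1 z hz1]
      _ = (-1:ℝ)^(j+1) / ∏ i ∈ Finset.Icc 1 j, ((i : ℝ) - z) := by
          field_simp
  rw [hfun]
  exact hval ▸ h
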